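/- Let Φ : (S,·) → (T,·) be a semigroup homomorphism such that Φ(S) is a J-set in T. If A ⊆ S is a C-set in S, then Φ(A) is a C-set in T. -/

import Mathlib

universe u v

/-- Left fold of multiplication: `mulList x [y₁,…,yₙ] = x * y₁ * ⋯ * yₙ` (product taken
in order; no identity element needed). -/
def mulList {T : Type u} [Mul T] : T → List T → T
  | x, [] => x
  | x, y :: l => mulList (x * y) l

/-- For `m ≥ 1` (here the paper's `m` is `m + 1`), `a ∈ T^{m+2}`, a strictly increasing
`t ∈ ℕ^{m+1}` and `f : ℕ → T`, this is the ordered product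
`x(m,a,t,f) = (∏_{j=1}^{m+1} a(j)·f(t(j))) · a(m+2)`. -/
def xProd {T : Type u} [Mul T] (m : ℕ) (a : Fin (m + 2) → T) (t : Fin (m + 1) → ℕ)
    (f : ℕ → T) : T :=
  mulList (a 0 * f (t 0))
    ((List.ofFn fun j : Fin m => a j.succ.castSucc * f (t j.succ)) ++ [a (Fin.last (m + 1))])

/-- A subset `A` of a semigroup `T` is a *J-set* if for every finite nonempty set `F` of
sequences `f : ℕ → T` there exist `m`, `a ∈ T^{m+1}` and strictly increasing
`t(1) < ⋯ < t(m)` in `ℕ` such that `x(m,a,t,f) ∈ A` for every `f ∈ F`. -/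
def MulJSet {T : Type u} [Mul T] (A : Set T) : Prop :=
  ∀ F : Finset (ℕ → T), F.Nonempty →
    ∃ (m : ℕ) (a : Fin (m + 2) → T) (t : Fin (m + 1) → ℕ),
      StrictMono t ∧ ∀ f ∈ F, xProd m a t f ∈ A

/-- A subset `A` of a semigroup `T` is a *C-set* if there is a downward directed family
`⟨C_i⟩_{i ∈ I}` of subsets of `A` (here `r i j` means `i ≥ j`, `(I,≥)` is a directed set
and `i ≥ j → C_i ⊆ C_j`) such that (1) for each `i ∈ I` and `x ∈ C_i` there is `j ∈ I`
with `C_j ⊆ x⁻¹C_i = {y | x·y ∈ C_i}`, and (2) for each finite nonempty `ℱ ⊆ I`, the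
intersection `⋂_{i ∈ ℱ} C_i` is a J-set in `T`. -/
def MulCSet {T : Type u} [Mul T] (A : Set T) : Prop :=
  ∃ (I : Type u) (r : I → I → Prop) (C : I → Set T),
    Nonempty I ∧ (∀ i, r i i) ∧ (∀ i j k, r i j → r j k → r i k) ∧
    (∀ i j, ∃ k, r k i ∧ r k j) ∧ (∀ i j, r i j → C i ⊆ C j) ∧
    (∀ i, C i ⊆ A) ∧
    (∀ i, ∀ x ∈ C i, ∃ j, C j ⊆ {y | x * y ∈ C i}) ∧
    (∀ ℱ : Finset I, ℱ.Nonempty → MulJSet (⋂ i ∈ ℱ, C i))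

namespace CSetAux

variable {T : Type*} [Semigroup T]

theorem mulList_nil (x : T) : mulList x [] = x := rfl

theorem mulList_cons (x y : T) (l : List T) : mulList x (y :: l) = mulList (x * y) l := rfl

theorem mulList_append (x : T) (l1 l2 : List T) :
    mulList x (l1 ++ l2) = mulList (mulList x l1) l2 := by
  induction l1 generalizing x with
  | nil => rfl
  | cons y l ih => rw [List.cons_append, mulList_cons, mulList_cons, ih]

theorem mul_mulList (u x : T) (l : List T) :
    u * mulList x l = mulList (u * x) l := by
  induction l generalizing x with
  | nil => rfl
  | cons y l ih => rw [mulList_cons, mulList_cons, ih, ← mul_assoc]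

theorem mulList_append_cons (x : T) (l : List T) (y : T) (L : List T) :
    mulList x (l ++ y :: L) = mulList x l * mulList y L := by
  rw [mulList_append, mulList_cons, ← mul_mulList]

def chain {T' : Type*} [Mul T'] (a0 : T') (t0 : ℕ) (p : List (T' × ℕ)) (c : T')
    (f : ℕ → T') : T' :=
  mulList (a0 * f t0) (p.map (fun q => q.1 * f q.2) ++ [c])

theorem chain_eq (a0 : T) (t0 : ℕ) (p : List (T × ℕ)) (c : T) (f : ℕ → T) :
    chain a0 t0 p c f = mulList (a0 * f t0) (p.map (fun q => q.1 * f q.2)) * c := by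
  unfold chain
  rw [show ([c] : List T) = c :: [] from rfl, mulList_append_cons, mulList_nil]

theorem mul_chain (u a0 : T) (t0 : ℕ) (p : List (T × ℕ)) (c : T) (f : ℕ → T) :
    u * chain a0 t0 p c f = chain (u * a0) t0 p c f := by
  unfold chain; rw [mul_mulList, mul_assoc]

theorem chain_mul (a0 : T) (t0 : ℕ) (p : List (T × ℕ)) (c e : T) (f : ℕ → T) :
    chain a0 t0 p c f * e = chain a0 t0 p (c * e) f := by
  rw [chain_eq, chain_eq, mul_assoc]

theorem chain_mul_chain (a0 : T) (t0 : ℕ) (p : List (T × ℕ)) (c b0 : T) (s0 : ℕ)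
    (q : List (T × ℕ)) (d : T) (f : ℕ → T) :
    chain a0 t0 p c f * chain b0 s0 q d f =
      chain a0 t0 (p ++ (c * b0, s0) :: q) d f := by
  rw [chain_eq, chain_eq, chain_eq]
  simp only [List.map_append, List.map_cons]
  rw [mulList_append_cons, mul_assoc c b0 (f s0), ← mul_mulList]
  simp only [mul_assoc]
  rw [← mul_assoc c, mul_mulList]


/-- Block data: head coefficient, head time, tail list, final coefficient. -/
abbrev Dat (T' : Type _) := T' × ℕ × List (T' × ℕ) × T'

def chainD {T' : Type*} [Mul T'] (d : Dat T') (f : ℕ → T') : T' :=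
  chain d.1 d.2.1 d.2.2.1 d.2.2.2 f

def tlist {T' : Type _} (d : Dat T') : List ℕ := d.2.1 :: d.2.2.1.map Prod.snd

def comb {T' : Type*} [Mul T'] (D : ℕ → Dat T') :
    List (T' × ℕ) → List (T' × ℕ) × T' → List (T' × ℕ) × T'
  | [], pc => pc
  | (u, k) :: L, (p, c) =>
      comb D L (p ++ (c * (u * (D k).1), (D k).2.1) :: (D k).2.2.1, (D k).2.2.2)

theorem comb_spec (D : ℕ → Dat T) (f : ℕ → T) (h : ℕ → T)
    (hh : ∀ k, h k = chainD (D k) f) :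
    ∀ (L : List (T × ℕ)) (p : List (T × ℕ)) (c a0 : T) (t0 : ℕ),
      mulList (chain a0 t0 p c f) (L.map (fun q => q.1 * h q.2)) =
        chain a0 t0 (comb D L (p, c)).1 (comb D L (p, c)).2 f := by
  intro L
  induction L with
  | nil => intro p c a0 t0; rfl
  | cons uk L ih =>
      obtain ⟨u, k⟩ := uk
      intro p c a0 t0
      rw [List.map_cons, mulList_cons, hh k, chainD, mul_chain, chain_mul_chain]
      exact ih _ _ _ _

theorem comb_snd (D : ℕ → Dat T) :
    ∀ (L : List (T × ℕ)) (p : List (T × ℕ)) (c : T),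
      (comb D L (p, c)).1.map Prod.snd =
        p.map Prod.snd ++ (L.map Prod.snd).flatMap (fun k => tlist (D k)) := by
  intro L
  induction L with
  | nil => intro p c; simp [comb]
  | cons uk L ih =>
      obtain ⟨u, k⟩ := uk
      intro p c
      show (comb D L _).1.map Prod.snd = _
      rw [ih]
      simp [tlist, List.flatMap_cons]

theorem map_mulList {S' : Type*} {T' : Type*} [Semigroup S'] [Semigroup T'] (Φ : S' → T')
    (hΦ : ∀ x y : S', Φ (x * y) = Φ x * Φ y) (x : S') (l : List S') :
    Φ (mulList x l) = mulList (Φ x) (l.map Φ) := by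
  induction l generalizing x with
  | nil => rfl
  | cons y l ih => rw [mulList_cons, List.map_cons, mulList_cons, ih, hΦ]

theorem xProd_eq_chain (m : ℕ) (a : Fin (m + 2) → T) (t : Fin (m + 1) → ℕ) (f : ℕ → T) :
    xProd m a t f = chain (a 0) (t 0)
      (List.ofFn fun j : Fin m => (a j.succ.castSucc, t j.succ)) (a (Fin.last (m + 1))) f := by
  simp only [xProd, chain, List.map_ofFn]
  rfl

theorem map_xProd_eq_chain {S' : Type*} [Semigroup S'] (Φ : S' → T)
    (hΦ : ∀ x y : S', Φ (x * y) = Φ x * Φ y)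
    (D : ℕ → Dat T) (f : ℕ → T) (g : ℕ → S')
    (hg : ∀ k, Φ (g k) = chainD (D k) f)
    (M : ℕ) (b : Fin (M + 2) → S') (τ : Fin (M + 1) → ℕ) :
    Φ (xProd M b τ g) =
      chain (Φ (b 0) * (D (τ 0)).1) (D (τ 0)).2.1
        (comb D (List.ofFn fun j : Fin M => (Φ (b j.succ.castSucc), τ j.succ))
          ((D (τ 0)).2.2.1, (D (τ 0)).2.2.2)).1
        ((comb D (List.ofFn fun j : Fin M => (Φ (b j.succ.castSucc), τ j.succ))
          ((D (τ 0)).2.2.1, (D (τ 0)).2.2.2)).2 * Φ (b (Fin.last (M + 1)))) f := by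
  have h1 : Φ (xProd M b τ g) =
      mulList (Φ (b 0) * Φ (g (τ 0)))
        (((List.ofFn fun j : Fin M => (Φ (b j.succ.castSucc), τ j.succ)).map
            (fun q => q.1 * Φ (g q.2))) ++ [Φ (b (Fin.last (M + 1)))]) := by
    rw [xProd, map_mulList Φ hΦ]
    simp only [List.map_append, List.map_ofFn, List.map_cons, List.map_nil, hΦ]
    congr 1
    congr 1
    exact congrArg List.ofFn (funext fun j => hΦ _ _)
  rw [h1, mulList_append_cons, mulList_nil, hg, chainD, mul_chain,
    comb_spec D f (fun k => Φ (g k)) hg, chain_mul]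


theorem MulJSet.mono {T' : Type*} [Mul T'] {A B : Set T'} (h : MulJSet A) (hAB : A ⊆ B) :
    MulJSet B := by
  intro F hF
  obtain ⟨m, a, t, ht, hm⟩ := h F hF
  exact ⟨m, a, t, ht, fun f hf => hAB (hm f hf)⟩

theorem exists_xProd_eq_chain (a0 : T) (t0 : ℕ) (p : List (T × ℕ)) (c : T)
    (hp : (t0 :: p.map Prod.snd).Pairwise (· < ·)) :
    ∃ (m : ℕ) (a : Fin (m + 2) → T) (t : Fin (m + 1) → ℕ), StrictMono t ∧
      ∀ f : ℕ → T, xProd m a t f = chain a0 t0 p c f := by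
  set q : List (T × ℕ) := (a0, t0) :: p with hq
  refine ⟨p.length,
    fun i => if h : (i : ℕ) < p.length + 1 then (q[(i : ℕ)]'h).1 else c,
    fun i => (q[(i : ℕ)]'(by exact i.2)).2, ?_, ?_⟩
  · intro i j hij
    have hpw : (q.map Prod.snd).Pairwise (· < ·) := hp
    have hi : (i : ℕ) < (q.map Prod.snd).length := by
      rw [List.length_map]; exact i.2
    have hj' : (j : ℕ) < (q.map Prod.snd).length := by
      rw [List.length_map]; exact j.2
    have h2 := List.pairwise_iff_getElem.1 hpw (i : ℕ) (j : ℕ) hi hj' hij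
    simp only [List.getElem_map] at h2
    exact h2
  · intro f
    rw [xProd_eq_chain]
    congr 1
    · simp [hq]
    · simp

theorem pairwise_flatMap {tl : ℕ → List ℕ} {Nb : ℕ → ℕ}
    (hNb : Monotone Nb) (hlt : ∀ k, ∀ x ∈ tl k, Nb k < x)
    (hle : ∀ k, ∀ x ∈ tl k, x ≤ Nb (k + 1))
    (hpw : ∀ k, (tl k).Pairwise (· < ·)) :
    ∀ ks : List ℕ, ks.Pairwise (· < ·) → (ks.flatMap tl).Pairwise (· < ·) := by
  intro ks
  induction ks with
  | nil => simp
  | cons k ks ih =>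
      intro h
      rw [List.flatMap_cons, List.pairwise_append]
      refine ⟨hpw k, ih (List.Pairwise.of_cons h), ?_⟩
      intro x hx y hy
      obtain ⟨k', hk', hy'⟩ := List.mem_flatMap.1 hy
      have h1 : k < k' := (List.pairwise_cons.1 h).1 k' hk'
      calc x ≤ Nb (k + 1) := hle k x hx
        _ ≤ Nb k' := hNb h1
        _ < y := hlt k' y hy'

theorem le_foldr_max (l : List ℕ) : ∀ x ∈ l, x ≤ l.foldr max 0 := by
  induction l with
  | nil => simp
  | cons y l ih =>
      intro x hx
      rcases List.mem_cons.1 hx with h | h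
      · subst h; exact le_max_left _ _
      · exact le_trans (ih x h) (le_max_right _ _)

theorem exists_block {S' : Type*} [Semigroup S'] (Φ : S' → T)
    (hrange : MulJSet (Set.range Φ)) (F : Finset (ℕ → T)) (hF : F.Nonempty) (N : ℕ) :
    ∃ d : Dat T, (tlist d).Pairwise (· < ·) ∧
      (∀ x ∈ tlist d, N < x) ∧ ∀ f ∈ F, chainD d f ∈ Set.range Φ := by
  classical
  obtain ⟨m, a, t, ht, hmem⟩ := hrange (F.image fun f n => f (n + (N + 1))) (hF.image _)
  refine ⟨⟨a 0, t 0 + (N + 1),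
    List.ofFn fun j : Fin m => (a j.succ.castSucc, t j.succ + (N + 1)),
    a (Fin.last (m + 1))⟩, ?_, ?_, ?_⟩ <;>
  · have htl : tlist (⟨a 0, t 0 + (N + 1),
        List.ofFn fun j : Fin m => (a j.succ.castSucc, t j.succ + (N + 1)),
        a (Fin.last (m + 1))⟩ : Dat T) =
          List.ofFn (fun i : Fin (m + 1) => t i + (N + 1)) := by
      show (t 0 + (N + 1)) :: _ = _
      rw [List.map_ofFn, List.ofFn_succ (f := fun i : Fin (m + 1) => t i + (N + 1))]
      rfl
    first
    | (rw [htl, List.pairwise_ofFn]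
       intro i j hij
       have := ht hij
       omega)
    | (intro x hx
       rw [htl] at hx
       obtain ⟨j, hj⟩ := List.mem_ofFn.1 hx
       have hjx : t j + (N + 1) = x := hj
       omega)
    | (intro f hf
       have h2 := hmem _ (Finset.mem_image_of_mem _ hf)
       have h3 : chainD (⟨a 0, t 0 + (N + 1),
           List.ofFn fun j : Fin m => (a j.succ.castSucc, t j.succ + (N + 1)),
           a (Fin.last (m + 1))⟩ : Dat T) f =
             xProd m a (fun i => (t i) + (N + 1)) f := by
         rw [xProd_eq_chain]; rfl
       have h4 : xProd m a (fun i => (t i) + (N + 1)) f =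
           xProd m a t (fun n => f (n + (N + 1))) := rfl
       rw [h3, h4]
       exact h2)


theorem mulJSet_image {S' : Type*} [Semigroup S'] (Φ : S' → T)
    (hΦ : ∀ x y : S', Φ (x * y) = Φ x * Φ y)
    (hrange : MulJSet (Set.range Φ))
    {B : Set S'} (hB : MulJSet B) : MulJSet (Φ '' B) := by
  classical
  intro F hF
  obtain ⟨pick, hpick⟩ : ∃ pick : ℕ → Dat T, ∀ N,
      (tlist (pick N)).Pairwise (· < ·) ∧ (∀ x ∈ tlist (pick N), N < x) ∧
        ∀ f ∈ F, chainD (pick N) f ∈ Set.range Φ :=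
    ⟨fun N => (exists_block Φ hrange F hF N).choose,
     fun N => (exists_block Φ hrange F hF N).choose_spec⟩
  set Nb : ℕ → ℕ := fun k =>
    Nat.rec 0 (fun _ prev => (tlist (pick prev)).foldr max 0) k with hNbdef
  set D : ℕ → Dat T := fun k => pick (Nb k) with hDdef
  have hNbsucc : ∀ k, Nb (k + 1) = (tlist (D k)).foldr max 0 := fun k => rfl
  have hle : ∀ k, ∀ x ∈ tlist (D k), x ≤ Nb (k + 1) := by
    intro k x hx
    rw [hNbsucc]
    exact le_foldr_max _ x hx
  have hlt : ∀ k, ∀ x ∈ tlist (D k), Nb k < x := fun k => (hpick (Nb k)).2.1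
  have hpw : ∀ k, (tlist (D k)).Pairwise (· < ·) := fun k => (hpick (Nb k)).1
  have hmem : ∀ k, ∀ f ∈ F, chainD (D k) f ∈ Set.range Φ := fun k => (hpick (Nb k)).2.2
  have hhead : ∀ k, (D k).2.1 ∈ tlist (D k) := fun k => List.mem_cons_self
  have hNbmono : Monotone Nb := by
    apply monotone_nat_of_le_succ
    intro k
    exact le_of_lt (lt_of_lt_of_le (hlt k _ (hhead k)) (hle k _ (hhead k)))
  obtain ⟨f₀, hf₀⟩ := hF
  obtain ⟨s0, -⟩ := hmem 0 f₀ hf₀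
  haveI : Nonempty S' := ⟨s0⟩
  have hex : ∀ f, f ∈ F → ∀ k, ∃ s : S', Φ s = chainD (D k) f := fun f hf k => hmem k f hf
  choose! σ hσ using hex
  obtain ⟨M, b, τ, hτ, hx⟩ := hB (F.image σ) (Finset.Nonempty.image ⟨f₀, hf₀⟩ σ)
  have hsnd := comb_snd D (List.ofFn fun j : Fin M => (Φ (b j.succ.castSucc), τ j.succ))
    (D (τ 0)).2.2.1 (D (τ 0)).2.2.2
  have hLsnd : (List.ofFn fun j : Fin M => ((Φ (b j.succ.castSucc), τ j.succ) : T × ℕ)).map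
      Prod.snd = List.ofFn (fun j : Fin M => τ j.succ) := by
    rw [List.map_ofFn]; rfl
  have hbig : (D (τ 0)).2.1 ::
      (comb D (List.ofFn fun j : Fin M => (Φ (b j.succ.castSucc), τ j.succ))
        ((D (τ 0)).2.2.1, (D (τ 0)).2.2.2)).1.map Prod.snd =
      (List.ofFn τ).flatMap (fun k => tlist (D k)) := by
    rw [hsnd, hLsnd, List.ofFn_succ (f := τ), List.flatMap_cons]
    show _ = ((D (τ 0)).2.1 :: (D (τ 0)).2.2.1.map Prod.snd) ++ _
    rw [List.cons_append]
  have hpair : ((List.ofFn τ).flatMap fun k => tlist (D k)).Pairwise (· < ·) :=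
    pairwise_flatMap hNbmono hlt hle hpw _ (List.pairwise_ofFn.2 (fun _ _ hij => hτ hij))
  obtain ⟨m', a', t', hmono, heq⟩ := exists_xProd_eq_chain
    (Φ (b 0) * (D (τ 0)).1) ((D (τ 0)).2.1)
    (comb D (List.ofFn fun j : Fin M => (Φ (b j.succ.castSucc), τ j.succ))
      ((D (τ 0)).2.2.1, (D (τ 0)).2.2.2)).1
    ((comb D (List.ofFn fun j : Fin M => (Φ (b j.succ.castSucc), τ j.succ))
      ((D (τ 0)).2.2.1, (D (τ 0)).2.2.2)).2 * Φ (b (Fin.last (M + 1))))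
    (hbig ▸ hpair)
  refine ⟨m', a', t', hmono, fun f hf => ?_⟩
  rw [heq f, ← map_xProd_eq_chain Φ hΦ D f (σ f) (hσ f hf) M b τ]
  exact Set.mem_image_of_mem Φ (hx (σ f) (Finset.mem_image_of_mem σ hf))

end CSetAux

/-- If `Φ : S → T` is a semigroup homomorphism such that `Φ(S)` is a J-set in `T`, and
`A ⊆ S` is a C-set in `S`, then `Φ(A)` is a C-set in `T`. -/
theorem mulCSet_image_of_mulCSet {S : Type u} {T : Type v}
    [Semigroup S] [Semigroup T] (Φ : S → T)
    (hΦ : ∀ x y : S, Φ (x * y) = Φ x * Φ y)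
    (hrange : MulJSet (Set.range Φ))
    (A : Set S) (hA : MulCSet A) : MulCSet (Φ '' A) := by
  classical
  obtain ⟨I, r, C, hne, hrefl, htrans, hdir, hmono, hsub, hshift, hJ⟩ := hA
  refine ⟨{D : Set T // ∃ i : I, D = Φ '' C i}, fun D D' => D.1 ⊆ D'.1,
    fun D => D.1, ?_, ?_, ?_, ?_, ?_, ?_, ?_, ?_⟩
  · obtain ⟨i0⟩ := hne
    exact ⟨⟨Φ '' C i0, i0, rfl⟩⟩
  · exact fun D => subset_rfl
  · exact fun D E G h1 h2 => h1.trans h2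
  · intro D E
    obtain ⟨k, hk1, hk2⟩ := hdir D.2.choose E.2.choose
    refine ⟨⟨Φ '' C k, k, rfl⟩, ?_, ?_⟩
    · show Φ '' C k ⊆ D.1
      rw [D.2.choose_spec]
      exact Set.image_mono (hmono _ _ hk1)
    · show Φ '' C k ⊆ E.1
      rw [E.2.choose_spec]
      exact Set.image_mono (hmono _ _ hk2)
  · exact fun D E h => h
  · intro D
    show D.1 ⊆ Φ '' A
    rw [D.2.choose_spec]
    exact Set.image_mono (hsub _)
  · intro D x hx
    have hx' : x ∈ Φ '' C D.2.choose := by rw [← D.2.choose_spec]; exact hx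
    obtain ⟨s, hs, rfl⟩ := hx'
    obtain ⟨j, hj⟩ := hshift D.2.choose s hs
    refine ⟨⟨Φ '' C j, j, rfl⟩, ?_⟩
    rintro y ⟨u, hu, rfl⟩
    show Φ s * Φ u ∈ D.1
    rw [← hΦ, D.2.choose_spec]
    exact ⟨s * u, hj hu, rfl⟩
  · intro ℱ hℱ
    have hB := hJ (ℱ.image fun D => D.2.choose) (hℱ.image _)
    apply CSetAux.MulJSet.mono (CSetAux.mulJSet_image Φ hΦ hrange hB)
    rintro x ⟨s, hs, rfl⟩
    simp only [Set.mem_iInter]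
    intro D hD
    show Φ s ∈ D.1
    rw [D.2.choose_spec]
    have : s ∈ C D.2.choose :=
      Set.mem_iInter₂.1 hs _ (Finset.mem_image_of_mem _ hD)
    exact ⟨s, this, rfl⟩
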